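/- Let ω = (ω₁, ω₂) ∈ ℝ² with ω ≠ 0, set ω⊥ = (ω₂, −ω₁), and let s₁, s₂ > 1/2 satisfy 1/s₁ + 1/s₂ < 2. Then there exists a constant C = C(ω, s₁, s₂) such that for every trigonometric polynomial f on 𝕋² with coefficients f̂ : ℤ² → ℂ and every x ∈ ℝ²: |f(x)| ≤ C·[ (Σ_{n∈ℤ²} (1+(ω·n)²)^{s₁} |f̂(n)|²)^{1/2} + (Σ_{n∈ℤ²} (1+(ω⊥·n)²)^{s₂} |f̂(n)|²)^{1/2} ]. -/

import Mathlib

open scoped Real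

/-- The trigonometric polynomial on `𝕋²` with Fourier coefficients `c : ℤ² → ℂ`,
viewed as a function on `ℝ²`: `x ↦ Σ_{n∈ℤ²} c(n) e^{2πi n·x}`. -/
noncomputable def trigSum (c : ℤ × ℤ → ℂ) (x : ℝ × ℝ) : ℂ :=
  ∑' n : ℤ × ℤ, c n * Complex.exp (2 * Real.pi * Complex.I *
    (((n.1 : ℝ) * x.1 + (n.2 : ℝ) * x.2 : ℝ) : ℂ))


lemma summable_int_one_add_sq_rpow {p : ℝ} (hp : 1/2 < p) :
    Summable fun k : ℤ => (1 + (k:ℝ)^2) ^ (-p) := by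
  have hnat : Summable fun n : ℕ => (1 + (n:ℝ)^2) ^ (-p) := by
    have hbase : Summable fun n : ℕ => ((n:ℝ)+1) ^ (-(2*p)) := by
      have := (summable_nat_add_iff (f := fun n : ℕ => (n:ℝ) ^ (-(2*p))) 1).2
        (Real.summable_nat_rpow.2 (by linarith))
      simpa [Nat.cast_add] using this
    apply Summable.of_nonneg_of_le (fun n => by positivity) (fun n => ?_)
      (hbase.mul_left ((2:ℝ) ^ p))
    have h1 : ((n:ℝ)+1)^2 / 2 ≤ 1 + (n:ℝ)^2 := by nlinarith [sq_nonneg ((n:ℝ) - 1)]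
    have h2 : (0:ℝ) < ((n:ℝ)+1)^2 / 2 := by positivity
    have hn1 : (0:ℝ) < (n:ℝ)+1 := by positivity
    calc (1 + (n:ℝ)^2) ^ (-p) ≤ (((n:ℝ)+1)^2 / 2) ^ (-p) :=
          Real.rpow_le_rpow_of_nonpos h2 h1 (by linarith)
      _ = (2:ℝ)^p * ((n:ℝ)+1) ^ (-(2*p)) := by
          rw [Real.div_rpow (by positivity) (by norm_num), Real.rpow_neg (by positivity),
            Real.rpow_neg (by norm_num : (0:ℝ) ≤ 2), ← Real.rpow_natCast ((n:ℝ)+1) 2,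
            ← Real.rpow_mul hn1.le, Real.rpow_neg hn1.le]
          push_cast
          field_simp
  rw [summable_int_iff_summable_nat_and_neg]
  constructor <;> [exact hnat; (simpa using hnat)]

-- weighted AM-GM for A,B ≥ 1
lemma amgm_aux {A B θ : ℝ} (hA : 1 ≤ A) (hB : 1 ≤ B) (hθ0 : 0 ≤ θ) (hθ1 : θ ≤ 1) :
    A ^ θ * B ^ (1 - θ) ≤ A + B := by
  have hA0 : (0:ℝ) ≤ A := by linarith
  have hB0 : (0:ℝ) ≤ B := by linarith
  rcases le_total A B with h | h
  · calc A ^ θ * B ^ (1-θ) ≤ B ^ θ * B ^ (1-θ) := by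
          gcongr
      _ = B := by rw [← Real.rpow_add (by linarith)]; simp
      _ ≤ A + B := by linarith
  · calc A ^ θ * B ^ (1-θ) ≤ A ^ θ * A ^ (1-θ) := by
          gcongr
      _ = A := by rw [← Real.rpow_add (by linarith)]; simp
      _ ≤ A + B := by linarith

lemma floor_sq_bound {T a : ℝ} (hT : 0 < T) :
    min (1/2) (min 1 (T^2/4)) * (1 + (⌊a/T⌋:ℝ)^2) ≤ 1 + a^2 := by
  set c := min (1/2) (min 1 (T^2/4)) with hc
  have hc1 : c ≤ 1/2 := min_le_left _ _
  have hc2 : c ≤ 1 := le_trans (min_le_right _ _) (min_le_left _ _)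
  have hc3 : c ≤ T^2/4 := le_trans (min_le_right _ _) (min_le_right _ _)
  set k : ℤ := ⌊a/T⌋ with hk
  have h1 : ((k:ℝ)) * T ≤ a := (le_div_iff₀ hT).1 (Int.floor_le _)
  have h2 : a < ((k:ℝ) + 1) * T := (div_lt_iff₀ hT).1 (Int.lt_floor_add_one _)
  have hsq : (0:ℝ) ≤ a^2 := sq_nonneg a
  rcases le_or_gt 0 (k:ℝ) with hk0 | hk0
  · have : (k:ℝ)^2 * T^2 ≤ a^2 := by nlinarith [mul_nonneg hk0 hT.le]
    nlinarith [sq_nonneg (k:ℝ)]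
  · rcases le_or_gt (-1 : ℝ) (k:ℝ) with hkm | hkm
    · have hki : k = -1 := by
        have h1 : (-1:ℤ) ≤ k := by exact_mod_cast hkm
        have h2 : k < 0 := by exact_mod_cast hk0
        omega
      rw [hki]; norm_num; nlinarith
    · have hkle : (k:ℝ) ≤ -2 := by
        have h1 : k < -1 := by exact_mod_cast hkm
        have : k ≤ -2 := by omega
        exact_mod_cast this
      have ha0 : a < 0 := lt_of_lt_of_le h2 (by nlinarith)
      have hsq2 : ((k:ℝ)+1)^2 * T^2 ≤ a^2 := by
        nlinarith [mul_pos (by nlinarith : (0:ℝ) < ((k:ℝ)+1)*T - a)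
          (by nlinarith : (0:ℝ) < -(((k:ℝ)+1)*T) - a)]
      have h4 : (k:ℝ)^2 ≤ 4*((k:ℝ)+1)^2 := by
        nlinarith [mul_nonneg (by linarith : (0:ℝ) ≤ -(3*(k:ℝ)+2)) (by linarith : (0:ℝ) ≤ -((k:ℝ)+2))]
      nlinarith

set_option maxHeartbeats 1000000 in
lemma main_summable (ω : ℝ × ℝ) (hω : ω ≠ 0) {p q : ℝ} (hp : 1/2 < p) (hq : 1/2 < q) :
    Summable fun n : ℤ × ℤ =>
      (1 + (ω.1*(n.1:ℝ)+ω.2*(n.2:ℝ))^2) ^ (-p) * (1 + (ω.2*(n.1:ℝ)-ω.1*(n.2:ℝ))^2) ^ (-q) := by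
  have hR2 : 0 < ω.1^2 + ω.2^2 := by
    rcases not_and_or.1 (by simpa [Prod.ext_iff] using hω : ¬(ω.1 = 0 ∧ ω.2 = 0)) with h | h
    · positivity
    · positivity
  set R : ℝ := Real.sqrt (ω.1^2 + ω.2^2) with hR
  have hRpos : 0 < R := Real.sqrt_pos.2 hR2
  have hRT : R^2 = ω.1^2 + ω.2^2 := Real.sq_sqrt hR2.le
  set T : ℝ := R / 2 with hT
  have hTpos : 0 < T := by positivity
  set a : ℤ × ℤ → ℝ := fun n => ω.1*(n.1:ℝ)+ω.2*(n.2:ℝ) with ha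
  set b : ℤ × ℤ → ℝ := fun n => ω.2*(n.1:ℝ)-ω.1*(n.2:ℝ) with hb
  set φ : ℤ × ℤ → ℤ × ℤ := fun n => (⌊a n / T⌋, ⌊b n / T⌋) with hφ
  have habs : ∀ u v : ℝ, ⌊u / T⌋ = ⌊v / T⌋ → |u - v| < T := by
    intro u v huv
    have h1 : |u / T - v / T| < 1 := Int.abs_sub_lt_one_of_floor_eq_floor huv
    have h2 : |u - v| / T < 1 := by
      rw [← abs_of_pos hTpos, ← abs_div, sub_div]
      exact h1
    exact (div_lt_one hTpos).1 h2
  have hinj : Function.Injective φ := by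
    intro n m hnm
    by_contra hne
    have h1' : |a n - a m| < T := habs _ _ (congrArg Prod.fst hnm)
    have h2' : |b n - b m| < T := habs _ _ (congrArg Prod.snd hnm)
    have hA : (a n - a m)^2 < T^2 := sq_lt_sq' (abs_lt.1 h1').1 (abs_lt.1 h1').2
    have hB : (b n - b m)^2 < T^2 := sq_lt_sq' (abs_lt.1 h2').1 (abs_lt.1 h2').2
    have hid : (a n - a m)^2 + (b n - b m)^2
        = (ω.1^2 + ω.2^2) * (((n.1 - m.1 : ℤ):ℝ)^2 + ((n.2 - m.2 : ℤ):ℝ)^2) := by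
      simp only [ha, hb]; push_cast; ring
    have hz : (1:ℝ) ≤ ((n.1 - m.1 : ℤ):ℝ)^2 + ((n.2 - m.2 : ℤ):ℝ)^2 := by
      have h : n.1 - m.1 ≠ 0 ∨ n.2 - m.2 ≠ 0 := by
        by_contra h
        push_neg at h
        exact hne (Prod.ext (by omega) (by omega))
      have key : ∀ z : ℤ, z ≠ 0 → (1:ℝ) ≤ ((z:ℤ):ℝ)^2 := by
        intro z hz0
        have h1 : (1:ℤ) ≤ z^2 := by nlinarith [Int.one_le_abs hz0, sq_abs z, abs_nonneg z]
        exact_mod_cast h1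
      rcases h with h | h
      · nlinarith [key _ h, sq_nonneg ((n.2 - m.2:ℤ):ℝ)]
      · nlinarith [key _ h, sq_nonneg ((n.1 - m.1:ℤ):ℝ)]
    nlinarith [mul_le_mul_of_nonneg_left hz hR2.le]
  set cc : ℝ := min (1/2) (min 1 (T^2/4)) with hcc
  have hccpos : 0 < cc := lt_min (by norm_num) (lt_min one_pos (by positivity))
  have hl : ∀ r : ℝ, 1/2 < r → Summable fun k : ℤ => (cc*(1+(k:ℝ)^2)) ^ (-r) := by
    intro r hr
    have he : (fun k : ℤ => (cc*(1+(k:ℝ)^2)) ^ (-r))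
        = fun k : ℤ => cc ^ (-r) * (1+(k:ℝ)^2) ^ (-r) := by
      funext k
      exact Real.mul_rpow hccpos.le (by positivity)
    rw [he]
    exact (summable_int_one_add_sq_rpow hr).mul_left _
  have hg : Summable fun k : ℤ × ℤ =>
      (cc*(1+(k.1:ℝ)^2)) ^ (-p) * (cc*(1+(k.2:ℝ)^2)) ^ (-q) :=
    Summable.mul_of_nonneg (hl p hp) (hl q hq) (fun k => by positivity) (fun k => by positivity)
  apply Summable.of_nonneg_of_le (fun n => by positivity) _ (hg.comp_injective hinj)
  intro n
  simp only [Function.comp_apply, hφ]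
  have hb1 : (1 + (a n)^2) ^ (-p) ≤ (cc*(1+((⌊a n / T⌋:ℤ):ℝ)^2)) ^ (-p) :=
    Real.rpow_le_rpow_of_nonpos (by positivity) (floor_sq_bound hTpos) (by linarith)
  have hb2 : (1 + (b n)^2) ^ (-q) ≤ (cc*(1+((⌊b n / T⌋:ℤ):ℝ)^2)) ^ (-q) :=
    Real.rpow_le_rpow_of_nonpos (by positivity) (floor_sq_bound hTpos) (by linarith)
  exact mul_le_mul hb1 hb2 (by positivity) (by positivity)


lemma sqrt_add_le' {x y : ℝ} (hx : 0 ≤ x) (hy : 0 ≤ y) :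
    Real.sqrt (x + y) ≤ Real.sqrt x + Real.sqrt y := by
  have h : x + y ≤ (Real.sqrt x + Real.sqrt y)^2 := by
    nlinarith [Real.sq_sqrt hx, Real.sq_sqrt hy,
      mul_nonneg (Real.sqrt_nonneg x) (Real.sqrt_nonneg y)]
  calc Real.sqrt (x+y) ≤ Real.sqrt ((Real.sqrt x + Real.sqrt y)^2) := Real.sqrt_le_sqrt h
    _ = Real.sqrt x + Real.sqrt y := Real.sqrt_sq (by positivity)


/-- anisotropic Sobolev embedding `H^{s₁,s₂}_ω ↪ L^∞` for
trigonometric polynomials on `𝕋²`. Here `ω⊥ = (ω₂, −ω₁)`. -/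
theorem stmt_2 (ω : ℝ × ℝ) (hω : ω ≠ 0) (s₁ s₂ : ℝ)
    (hs₁ : 1 / 2 < s₁) (hs₂ : 1 / 2 < s₂) (hsum : 1 / s₁ + 1 / s₂ < 2) :
    ∃ C : ℝ, ∀ c : ℤ × ℤ → ℂ, (Function.support c).Finite → ∀ x : ℝ × ℝ,
      ‖trigSum c x‖ ≤ C *
        ((∑' n : ℤ × ℤ,
            (1 + (ω.1 * (n.1 : ℝ) + ω.2 * (n.2 : ℝ)) ^ 2) ^ s₁ * ‖c n‖ ^ 2) ^ ((1 : ℝ) / 2) +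
         (∑' n : ℤ × ℤ,
            (1 + (ω.2 * (n.1 : ℝ) - ω.1 * (n.2 : ℝ)) ^ 2) ^ s₂ * ‖c n‖ ^ 2) ^ ((1 : ℝ) / 2)) := by
  have hs₁0 : 0 < s₁ := by linarith
  have hs₂0 : 0 < s₂ := by linarith
  set θ : ℝ := (1/(2*s₁) + (1 - 1/(2*s₂)))/2 with hθ
  have h1 : 1/(2*s₁) + 1/(2*s₂) < 1 := by
    have e1 : 1/(2*s₁) = (1/s₁)/2 := by
      field_simp
    have e2 : 1/(2*s₂) = (1/s₂)/2 := by
      field_simp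
    rw [e1, e2]; linarith
  have hpos1 : 0 < 1/(2*s₁) := by positivity
  have hpos2 : 0 < 1/(2*s₂) := by positivity
  have hθa : 1/(2*s₁) < θ := by rw [hθ]; linarith
  have hθb : θ < 1 - 1/(2*s₂) := by rw [hθ]; linarith
  have hθ0 : 0 ≤ θ := by linarith
  have hθ1 : θ ≤ 1 := by linarith
  set p : ℝ := θ * s₁ with hpdef
  set q : ℝ := (1 - θ) * s₂ with hqdef
  have hp : 1/2 < p := by
    have hx : (1/2)/s₁ < θ := by rw [div_div]; exact hθa
    have := (div_lt_iff₀ hs₁0).1 hx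
    linarith
  have hq : 1/2 < q := by
    have hx : (1/2)/s₂ < 1 - θ := by rw [div_div]; linarith
    have := (div_lt_iff₀ hs₂0).1 hx
    linarith
  set a : ℤ × ℤ → ℝ := fun n => ω.1*(n.1:ℝ)+ω.2*(n.2:ℝ) with ha
  set b : ℤ × ℤ → ℝ := fun n => ω.2*(n.1:ℝ)-ω.1*(n.2:ℝ) with hb
  set W : ℤ × ℤ → ℝ := fun n => (1 + a n ^ 2) ^ s₁ + (1 + b n ^ 2) ^ s₂ with hW
  have hWpos : ∀ n, 0 < W n := by
    intro n
    have h1 : (0:ℝ) < (1 + a n ^ 2) ^ s₁ := Real.rpow_pos_of_pos (by positivity) _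
    have h2 : (0:ℝ) < (1 + b n ^ 2) ^ s₂ := Real.rpow_pos_of_pos (by positivity) _
    simp only [hW]
    linarith
  have hWsummable : Summable fun n => (W n)⁻¹ := by
    apply Summable.of_nonneg_of_le (fun n => inv_nonneg.2 (hWpos n).le) _ (main_summable ω hω hp hq)
    intro n
    have hA1 : (1:ℝ) ≤ (1 + a n ^ 2) ^ s₁ := Real.one_le_rpow (by nlinarith [sq_nonneg (a n)]) hs₁0.le
    have hB1 : (1:ℝ) ≤ (1 + b n ^ 2) ^ s₂ := Real.one_le_rpow (by nlinarith [sq_nonneg (b n)]) hs₂0.le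
    have key : (1 + a n ^ 2) ^ p * (1 + b n ^ 2) ^ q ≤ W n := by
      have := amgm_aux hA1 hB1 hθ0 hθ1
      rw [← Real.rpow_mul (by positivity), ← Real.rpow_mul (by positivity)] at this
      rw [hpdef, hqdef, mul_comm θ s₁, mul_comm (1-θ) s₂]
      exact this
    have hprodpos : (0:ℝ) < (1 + a n ^ 2) ^ p * (1 + b n ^ 2) ^ q := by
      have h1 := Real.rpow_pos_of_pos (show (0:ℝ) < 1 + a n ^ 2 by positivity) p
      have h2 := Real.rpow_pos_of_pos (show (0:ℝ) < 1 + b n ^ 2 by positivity) q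
      positivity
    calc (W n)⁻¹ ≤ ((1 + a n ^ 2) ^ p * (1 + b n ^ 2) ^ q)⁻¹ := by
          exact inv_anti₀ hprodpos key
      _ = (1 + a n ^ 2) ^ (-p) * (1 + b n ^ 2) ^ (-q) := by
          rw [mul_inv, Real.rpow_neg (by positivity), Real.rpow_neg (by positivity)]
  set K : ℝ := ∑' n, (W n)⁻¹ with hK
  have hK0 : 0 ≤ K := tsum_nonneg (fun n => inv_nonneg.2 (hWpos n).le)
  refine ⟨Real.sqrt K, fun c hc x => ?_⟩
  set s : Finset (ℤ × ℤ) := hc.toFinset with hs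
  have hcz : ∀ n ∉ s, c n = 0 := by
    intro n hn
    by_contra h
    exact hn (hc.mem_toFinset.2 h)
  -- Step 1: bound by sum of norms
  have step1 : ‖trigSum c x‖ ≤ ∑ n ∈ s, ‖c n‖ := by
    rw [trigSum, tsum_eq_sum (s := s) (fun n hn => by rw [hcz n hn]; simp)]
    refine le_trans (norm_sum_le _ _) (Finset.sum_le_sum fun n hn => ?_)
    rw [norm_mul]
    have he : ‖Complex.exp (2 * Real.pi * Complex.I *
        (((n.1 : ℝ) * x.1 + (n.2 : ℝ) * x.2 : ℝ) : ℂ))‖ = 1 := by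
      rw [Complex.norm_exp]
      norm_num [Complex.mul_re, Complex.mul_im]
    rw [he, mul_one]
  -- Step 2: Cauchy-Schwarz
  set u : ℤ × ℤ → ℝ := fun n => Real.sqrt ((W n)⁻¹) with hu
  set v : ℤ × ℤ → ℝ := fun n => Real.sqrt (W n) * ‖c n‖ with hv
  have huv : ∀ n, ‖c n‖ = u n * v n := by
    intro n
    have hne : Real.sqrt (W n) ≠ 0 := ne_of_gt (Real.sqrt_pos.2 (hWpos n))
    show ‖c n‖ = Real.sqrt ((W n)⁻¹) * (Real.sqrt (W n) * ‖c n‖)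
    rw [Real.sqrt_inv]
    exact (inv_mul_cancel_left₀ hne ‖c n‖).symm
  have hCS : ∑ n ∈ s, ‖c n‖ ≤ Real.sqrt (∑ n ∈ s, u n ^ 2) * Real.sqrt (∑ n ∈ s, v n ^ 2) := by
    rw [← Real.sqrt_mul (Finset.sum_nonneg fun n _ => by positivity)]
    rw [Real.le_sqrt (Finset.sum_nonneg fun n _ => by positivity)
      (mul_nonneg (Finset.sum_nonneg fun n _ => by positivity)
        (Finset.sum_nonneg fun n _ => by positivity))]
    calc (∑ n ∈ s, ‖c n‖) ^ 2 = (∑ n ∈ s, u n * v n) ^ 2 := by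
          congr 1; exact Finset.sum_congr rfl fun n _ => huv n
      _ ≤ (∑ n ∈ s, u n ^ 2) * (∑ n ∈ s, v n ^ 2) := Finset.sum_mul_sq_le_sq_mul_sq s u v
  have husq : ∑ n ∈ s, u n ^ 2 ≤ K := by
    have : ∀ n, u n ^ 2 = (W n)⁻¹ := fun n => Real.sq_sqrt (inv_nonneg.2 (hWpos n).le)
    calc ∑ n ∈ s, u n ^ 2 = ∑ n ∈ s, (W n)⁻¹ := Finset.sum_congr rfl fun n _ => this n
      _ ≤ K := hWsummable.sum_le_tsum s (fun n _ => inv_nonneg.2 (hWpos n).le)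
  set T₁ : ℝ := ∑' n : ℤ × ℤ, (1 + a n ^ 2) ^ s₁ * ‖c n‖ ^ 2 with hT₁
  set T₂ : ℝ := ∑' n : ℤ × ℤ, (1 + b n ^ 2) ^ s₂ * ‖c n‖ ^ 2 with hT₂
  have hT₁v : T₁ = ∑ n ∈ s, (1 + a n ^ 2) ^ s₁ * ‖c n‖ ^ 2 :=
    tsum_eq_sum (fun n hn => by rw [hcz n hn]; simp)
  have hT₂v : T₂ = ∑ n ∈ s, (1 + b n ^ 2) ^ s₂ * ‖c n‖ ^ 2 :=
    tsum_eq_sum (fun n hn => by rw [hcz n hn]; simp)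
  have hvsq : ∑ n ∈ s, v n ^ 2 = T₁ + T₂ := by
    rw [hT₁v, hT₂v, ← Finset.sum_add_distrib]
    refine Finset.sum_congr rfl fun n _ => ?_
    rw [hv]
    rw [mul_pow, Real.sq_sqrt (hWpos n).le, hW]
    ring
  have hT₁0 : 0 ≤ T₁ := hT₁v ▸ Finset.sum_nonneg fun n _ => by positivity
  have hT₂0 : 0 ≤ T₂ := hT₂v ▸ Finset.sum_nonneg fun n _ => by positivity
  have final : Real.sqrt (∑ n ∈ s, u n ^ 2) * Real.sqrt (∑ n ∈ s, v n ^ 2)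
      ≤ Real.sqrt K * (Real.sqrt T₁ + Real.sqrt T₂) := by
    have h1 : Real.sqrt (∑ n ∈ s, u n ^ 2) ≤ Real.sqrt K := Real.sqrt_le_sqrt husq
    have h2 : Real.sqrt (∑ n ∈ s, v n ^ 2) ≤ Real.sqrt T₁ + Real.sqrt T₂ := by
      rw [hvsq]; exact sqrt_add_le' hT₁0 hT₂0
    exact mul_le_mul h1 h2 (Real.sqrt_nonneg _) (Real.sqrt_nonneg _)
  have goal_eq : Real.sqrt T₁ + Real.sqrt T₂ = T₁ ^ ((1:ℝ)/2) + T₂ ^ ((1:ℝ)/2) := by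
    rw [Real.sqrt_eq_rpow, Real.sqrt_eq_rpow]
  calc ‖trigSum c x‖ ≤ ∑ n ∈ s, ‖c n‖ := step1
    _ ≤ Real.sqrt (∑ n ∈ s, u n ^ 2) * Real.sqrt (∑ n ∈ s, v n ^ 2) := hCS
    _ ≤ Real.sqrt K * (Real.sqrt T₁ + Real.sqrt T₂) := final
    _ = Real.sqrt K * (T₁ ^ ((1:ℝ)/2) + T₂ ^ ((1:ℝ)/2)) := by rw [goal_eq]
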